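/- Let 0 < q < 1, n ∈ ℕ₊, and θ ∈ (−π/n, π/n). With Θ = 2 arctan(((1+qⁿ)/(1−qⁿ)) tan(nθ/2)) and z = e^{iΘ}, the product identity (z^{1/2} q^{−M−1/2} + z^{−1/2} q^{M+1/2}) / (z^{1/2} q^{M+1/2} + z^{−1/2} q^{−M−1/2}) = e^{inθ} holds, where M = (n−1)/2 and z^{1/2} = e^{iΘ/2}. -/

import Mathlib

open Complex

/-- The choice `z = e^{iΘ}` solves the translation-invariance condition for the
Bethe ansatz droplet eigenvector. -/
theorem bethe_translation_invariance_condition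
    (q : ℝ) (hq0 : 0 < q) (hq1 : q < 1)
    (n : ℕ) (hn : 0 < n)
    (θ : ℝ) (hθ : θ ∈ Set.Ioo (-(Real.pi / n)) (Real.pi / n))
    (Θ : ℝ)
    (hΘ : Θ = 2 * Real.arctan (((1 + q ^ n) / (1 - q ^ n)) * Real.tan (n * θ / 2)))
    (M : ℝ) (hM : M = ((n:ℝ) - 1) / 2) :
    (Complex.exp (Θ/2 * I) * (q ^ (-M - 1/2) : ℝ)
        + Complex.exp (-(Θ/2) * I) * (q ^ (M + 1/2) : ℝ))
      / (Complex.exp (Θ/2 * I) * (q ^ (M + 1/2) : ℝ)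
        + Complex.exp (-(Θ/2) * I) * (q ^ (-M - 1/2) : ℝ))
      = Complex.exp (n * θ * I) := by
  -- basic facts
  have hb0 : (0:ℝ) < q ^ n := pow_pos hq0 n
  have hb1 : q ^ n < 1 := pow_lt_one₀ hq0.le hq1 hn.ne'
  set b : ℝ := q ^ n with hbdef
  set A : ℝ := q ^ ((n:ℝ)/2) with hAdef
  have hA0 : 0 < A := Real.rpow_pos_of_pos hq0 _
  have hA2 : A ^ 2 = b := by
    rw [hAdef, ← Real.rpow_natCast (q ^ ((n:ℝ)/2)) 2, ← Real.rpow_mul hq0.le]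
    norm_num
    exact hbdef.symm
  -- exponents
  have he1 : q ^ (M + 1/2) = A := by rw [hM, hAdef]; ring_nf
  have he2 : q ^ (-M - 1/2) = A⁻¹ := by
    rw [hM, hAdef, ← Real.rpow_neg hq0.le]; ring_nf
  rw [he1, he2]
  -- the angle t
  set t : ℝ := n * θ / 2 with htdef
  have hnθ : (n:ℝ) * θ = 2 * t := by rw [htdef]; ring
  have hnpos : (0:ℝ) < n := Nat.cast_pos.mpr hn
  have hub : θ * n < Real.pi := (lt_div_iff₀ hnpos).mp hθ.2
  have hlb : -Real.pi < θ * n := by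
    have h := hθ.1
    rw [← neg_div] at h
    exact (div_lt_iff₀ hnpos).mp h
  have ht1 : -(Real.pi/2) < t := by rw [htdef]; linarith
  have ht2 : t < Real.pi/2 := by rw [htdef]; linarith
  have hct : 0 < Real.cos t := Real.cos_pos_of_mem_Ioo ⟨ht1, ht2⟩
  -- the angle φ
  set φ : ℝ := Θ / 2 with hφdef
  have hφ : φ = Real.arctan ((1 + b) / (1 - b) * Real.tan t) := by
    rw [hφdef, hΘ]; ring
  have hcφ : 0 < Real.cos φ := by rw [hφ]; exact Real.cos_arctan_pos _
  have htanφ : Real.tan φ = (1 + b) / (1 - b) * Real.tan t := by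
    rw [hφ, Real.tan_arctan]
  have hkey : (1 - b) * Real.sin φ * Real.cos t = (1 + b) * Real.cos φ * Real.sin t := by
    have hsφ : Real.sin φ = Real.tan φ * Real.cos φ := by
      rw [Real.tan_eq_sin_div_cos]; field_simp
    have h1 : (1:ℝ) - b ≠ 0 := by linarith
    have h2 : Real.cos t ≠ 0 := hct.ne'
    rw [hsφ, htanφ, Real.tan_eq_sin_div_cos]
    field_simp
  -- rewrite exponentials
  have expand : ∀ x : ℝ, Complex.exp ((x:ℂ) * I) = (Real.cos x : ℂ) + (Real.sin x : ℂ) * I := by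
    intro x
    rw [Complex.exp_mul_I, Complex.ofReal_cos, Complex.ofReal_sin]
  have e1 : (Θ:ℂ)/2 * I = (φ:ℂ) * I := by rw [hφdef]; push_cast; ring
  have e2 : -((Θ:ℂ)/2) * I = ((-φ : ℝ):ℂ) * I := by rw [hφdef]; push_cast; ring
  have e3 : (n:ℂ) * (θ:ℂ) * I = ((2*t : ℝ):ℂ) * I := by
    have : ((n:ℝ) * θ : ℝ) = (2*t:ℝ) := hnθ
    push_cast [← this]; ring
  rw [e1, e2, e3, expand, expand, expand]
  simp only [Real.cos_neg, Real.sin_neg, Real.cos_two_mul, Real.sin_two_mul,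
    Complex.ofReal_neg, Complex.ofReal_sub, Complex.ofReal_mul, Complex.ofReal_add,
    Complex.ofReal_one, Complex.ofReal_ofNat, Complex.ofReal_pow]
  set cφ := Real.cos φ
  set sφ := Real.sin φ
  set ct := Real.cos t
  set st := Real.sin t
  set Ai := A⁻¹ with hAidef
  have hAi : Ai * A = 1 := inv_mul_cancel₀ hA0.ne'
  have hAinv : A⁻¹ * A = 1 := inv_mul_cancel₀ hA0.ne'
  have hpyt : st^2 + ct^2 = 1 := Real.sin_sq_add_cos_sq t
  have hden : ((cφ:ℂ) + (sφ:ℂ) * I) * (A:ℂ) + ((cφ:ℂ) + -(sφ:ℂ) * I) * ((Ai:ℝ):ℂ) ≠ 0 := by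
    intro h
    have hre := congrArg Complex.re h
    simp [Complex.add_re, Complex.mul_re] at hre
    have hAi0 : 0 < Ai := by rw [hAidef]; positivity
    nlinarith
  rw [div_eq_iff hden]
  apply Complex.ext
  · simp only [Complex.add_re, Complex.mul_re, Complex.mul_im, Complex.add_im,
      Complex.ofReal_re, Complex.ofReal_im, Complex.I_re, Complex.I_im, Complex.neg_re,
      Complex.neg_im, Complex.sub_re, Complex.sub_im, Complex.one_re, Complex.one_im,
      Complex.re_ofNat, Complex.im_ofNat, pow_two]
    linear_combination (-(2*st*A⁻¹))*hkey + (2*st*A⁻¹*(st*cφ+ct*sφ))*hA2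
      + (-(2*st*A*(st*cφ+ct*sφ)))*hAinv + (-(2*cφ*(A+A⁻¹)))*hpyt
  · simp only [Complex.add_re, Complex.mul_re, Complex.mul_im, Complex.add_im,
      Complex.ofReal_re, Complex.ofReal_im, Complex.I_re, Complex.I_im, Complex.neg_re,
      Complex.neg_im, Complex.sub_re, Complex.sub_im, Complex.one_re, Complex.one_im,
      Complex.re_ofNat, Complex.im_ofNat, pow_two]
    linear_combination (2*ct*A⁻¹)*hkey + (-(2*ct*A⁻¹*(ct*sφ+st*cφ)))*hA2
      + (2*ct*A*(ct*sφ+st*cφ))*hAinv
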